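/- The Berezin range of the rank one operator A(f) = ⟨f, 1+z⟩(1+z²) on H²(𝔻), namely Ber(A) = {(1-|λ|²)(1+conj(λ))(1+λ²) : λ ∈ 𝔻}, is not a convex subset of ℂ. -/

import Mathlib

theorem berezin_range_not_convex_hardy :
    ¬ Convex ℝ {z : ℂ | ∃ l : ℂ, ‖l‖ < 1 ∧
      z = ((1 - ‖l‖ ^ 2 : ℝ) : ℂ) * (1 + (starRingEnd ℂ) l) * (1 + l ^ 2)} := by
  intro hconv
  set l₀ : ℂ := ⟨-1/5, 9/10⟩ with hl₀
  set l₁ : ℂ := ⟨-1/5, -9/10⟩ with hl₁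
  have hn0 : ‖l₀‖ ^ 2 = 17/20 := by
    rw [Complex.sq_norm, Complex.normSq_apply]
    norm_num [hl₀]
  have hn1 : ‖l₁‖ ^ 2 = 17/20 := by
    rw [Complex.sq_norm, Complex.normSq_apply]
    norm_num [hl₁]
  have hlt0 : ‖l₀‖ < 1 := by nlinarith [norm_nonneg l₀]
  have hlt1 : ‖l₁‖ < 1 := by nlinarith [norm_nonneg l₁]
  have hw : (⟨-21/1000, -297/4000⟩ : ℂ) ∈ {z : ℂ | ∃ l : ℂ, ‖l‖ < 1 ∧
      z = ((1 - ‖l‖ ^ 2 : ℝ) : ℂ) * (1 + (starRingEnd ℂ) l) * (1 + l ^ 2)} := by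
    refine ⟨l₀, hlt0, ?_⟩
    rw [hn0]
    simp [Complex.ext_iff, Complex.mul_re, Complex.mul_im, pow_two, hl₀]
    norm_num
  have hw' : (⟨-21/1000, 297/4000⟩ : ℂ) ∈ {z : ℂ | ∃ l : ℂ, ‖l‖ < 1 ∧
      z = ((1 - ‖l‖ ^ 2 : ℝ) : ℂ) * (1 + (starRingEnd ℂ) l) * (1 + l ^ 2)} := by
    refine ⟨l₁, hlt1, ?_⟩
    rw [hn1]
    simp [Complex.ext_iff, Complex.mul_re, Complex.mul_im, pow_two, hl₁]
    norm_num
  have hmid := hconv hw hw' (by norm_num : (0:ℝ) ≤ 1/2) (by norm_num : (0:ℝ) ≤ 1/2)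
    (by norm_num : (1/2:ℝ) + 1/2 = 1)
  have hval : (1/2:ℝ) • (⟨-21/1000, -297/4000⟩ : ℂ) + (1/2:ℝ) • (⟨-21/1000, 297/4000⟩ : ℂ)
      = (⟨-21/1000, 0⟩ : ℂ) := by
    simp [Complex.ext_iff, Complex.smul_re, Complex.smul_im]
    norm_num
  rw [hval] at hmid
  obtain ⟨l, hl, heq⟩ := hmid
  clear hconv hw hw' hval hn0 hn1 hlt0 hlt1 hl₀ hl₁
  clear l₀ l₁
  set x := l.re with hx
  set y := l.im with hy
  have hn : ‖l‖ ^ 2 = x ^ 2 + y ^ 2 := by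
    rw [Complex.sq_norm, Complex.normSq_apply]; ring
  rw [hn] at heq
  have ht : (0:ℝ) < 1 - (x ^ 2 + y ^ 2) := by nlinarith [norm_nonneg l, hn, hl]
  rw [Complex.ext_iff] at heq
  simp [Complex.mul_re, Complex.mul_im, pow_two] at heq
  rw [← hx, ← hy] at heq
  obtain ⟨hre, him⟩ := heq
  clear_value x y
  clear hx hy hl hn l
  have hcase : y = 0 ∨ (x+1)^2 + y^2 = 2 := by
    rcases mul_eq_zero.mp (show y * ((x+1)^2 + y^2 - 2) = 0 by nlinarith [him, ht]) with h | h
    · exact Or.inl h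
    · exact Or.inr (by linarith)
  rcases hcase with h | h
  · -- y = 0 : value is (1-x²)(1+x)(1+x²) > 0
    have hxlt : x ^ 2 < 1 := by nlinarith [ht, sq_nonneg y]
    have h1x : 0 < 1 + x := by nlinarith
    have hp : 0 < (1 - (x*x + y*y)) * (1 + x) * (1 + (x*x - y*y)) := by
      apply mul_pos (mul_pos (by nlinarith) h1x)
      nlinarith [h, sq_nonneg x]
    have hkey : (-21/1000 : ℝ) = (1 - (x*x + y*y)) * (1 + x) * (1 + (x*x - y*y)) := by
      linear_combination hre + ((1 - (x*x + y*y)) * (x*y + y*x)) * h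
    linarith
  · -- (x+1)² + y² = 2 : value is 8x² ≥ 0
    have hy2 : y * y = 1 - 2*x - x*x := by nlinarith [h]
    have hkey : (-21/1000 : ℝ) = 8 * x^2 := by
      linear_combination hre + (2*x^2 - 6*x - (x-1)*(y*y - 1 + 2*x + x*x)) * hy2
    nlinarith [sq_nonneg x]
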